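/- Let G be a closed, convex germ containing the principal stem 𝒮 = cc(Δ_e ∪ B_i). If G is not itself a qplex, then the collection of qplexes containing G is uncountable. -/

import Mathlib

noncomputable section

/- Ambient space: ℝ^(d²) with the standard inner product. -/
abbrev V (d : ℕ) := EuclideanSpace ℝ (Fin (d^2))

/-- The standard inner product ⟨u, v⟩ = ∑ i, u i * v i. -/
def ip {d : ℕ} (u v : V d) : ℝ := inner ℝ u v

/-- The barycenter c, with all entries equal to 1/d². -/
def cpt (d : ℕ) : V d := WithLp.toLp 2 (fun _ => 1/(d^2:ℝ))

/-- The hyperplane H = {u : ⟨u, c⟩ = 1/d²} of vectors whose entries sum to 1. -/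
def Hs (d : ℕ) : Set (V d) := {u | ip u (cpt d) = 1/(d^2:ℝ)}

/-- The polar A* = {u ∈ H : ⟨u, v⟩ ≥ 1/(d(d+1)) for all v ∈ A}. -/
def polar (d : ℕ) (A : Set (V d)) : Set (V d) :=
  {u | u ∈ Hs d ∧ ∀ v ∈ A, 1/((d:ℝ)*((d:ℝ)+1)) ≤ ip u v}

/-- cc(A): the closed convex hull of A. -/
def cc (d : ℕ) (A : Set (V d)) : Set (V d) := closure (convexHull ℝ A)

/-- The probability simplex Δ = {u ∈ H : u i ≥ 0 for all i}. -/
def probSimplex (d : ℕ) : Set (V d) := {u | u ∈ Hs d ∧ ∀ i, 0 ≤ u i}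

/-- The basis distributions e_k, with e_k(i) = (δ_{ki} + 1/d)/(d+1). -/
def basisDist (d : ℕ) (k : Fin (d^2)) : V d :=
  WithLp.toLp 2 (fun i => ((if k = i then (1:ℝ) else 0) + 1/(d:ℝ)) / ((d:ℝ)+1))

/-- The basis simplex Δ_e: the convex hull of the basis distributions. -/
def basisSimplex (d : ℕ) : Set (V d) := convexHull ℝ (Set.range (basisDist d))

/-- The out-ball B_o = {u ∈ H : ⟨u, u⟩ ≤ 2/(d(d+1))}. -/
def outBall (d : ℕ) : Set (V d) := {u | u ∈ Hs d ∧ ip u u ≤ 2/((d:ℝ)*((d:ℝ)+1))}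

/-- The out-sphere S_o = {u ∈ H : ⟨u, u⟩ = 2/(d(d+1))}. -/
def outSphere (d : ℕ) : Set (V d) := {u | u ∈ Hs d ∧ ip u u = 2/((d:ℝ)*((d:ℝ)+1))}

/-- The in-ball B_i = {u ∈ H : ‖u − c‖² ≤ 1/(d²(d²−1))}. -/
def inBall (d : ℕ) : Set (V d) :=
  {u | u ∈ Hs d ∧ ‖u - cpt d‖^2 ≤ 1/((d:ℝ)^2*((d:ℝ)^2-1))}

/-- The in-sphere S_i = {u ∈ H : ‖u − c‖² = 1/(d²(d²−1))}. -/
def inSphere (d : ℕ) : Set (V d) :=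
  {u | u ∈ Hs d ∧ ‖u - cpt d‖^2 = 1/((d:ℝ)^2*((d:ℝ)^2-1))}

/-- The mid-ball B_m = {u ∈ H : ‖u − c‖² ≤ 1/(d²(d+1))}. -/
def midBall (d : ℕ) : Set (V d) :=
  {u | u ∈ Hs d ∧ ‖u - cpt d‖^2 ≤ 1/((d:ℝ)^2*((d:ℝ)+1))}

/-- A germ: a subset of Δ whose pairwise inner products satisfy the
fundamental inequalities 1/(d(d+1)) ≤ ⟨p, s⟩ ≤ 2/(d(d+1)). -/
def IsGerm (d : ℕ) (G : Set (V d)) : Prop :=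
  G ⊆ probSimplex d ∧
  ∀ p ∈ G, ∀ s ∈ G, 1/((d:ℝ)*((d:ℝ)+1)) ≤ ip p s ∧ ip p s ≤ 2/((d:ℝ)*((d:ℝ)+1))

/-- A qplex: a self-polar subset of Δ ∩ B_o. -/
def IsQplex (d : ℕ) (Q : Set (V d)) : Prop :=
  Q ⊆ probSimplex d ∩ outBall d ∧ Q = polar d Q

/-- Action of a d²×d² matrix on a vector: (R u)(i) = ∑ j, R i j * u j. -/
def mvec (d : ℕ) (R : Matrix (Fin (d^2)) (Fin (d^2)) ℝ) (u : V d) : V d :=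
  WithLp.toLp 2 (fun i => ∑ j, R i j * u j)

lemma ip_eq_sum {d : ℕ} (u v : V d) : ip u v = ∑ i, u i * v i := by
  simp [ip, PiLp.inner_apply, RCLike.inner_apply, mul_comm]

lemma ip_comm {d : ℕ} (u v : V d) : ip u v = ip v u := real_inner_comm v u

lemma ip_cpt_cpt {d : ℕ} (hd : 0 < d) : ip (cpt d) (cpt d) = 1/(d:ℝ)^2 := by
  have hd' : ((d:ℝ)) ≠ 0 := by positivity
  rw [ip_eq_sum]
  simp only [cpt, Finset.sum_const, Finset.card_univ, Fintype.card_fin, nsmul_eq_mul]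
  push_cast
  field_simp

lemma cpt_mem_Hs {d : ℕ} (hd : 0 < d) : cpt d ∈ Hs d := by
  simpa [Hs] using ip_cpt_cpt (d := d) hd

lemma sum_eq_one {d : ℕ} (hd : 0 < d) {u : V d} (hu : u ∈ Hs d) : ∑ i, u i = 1 := by
  have h : ip u (cpt d) = (∑ i, u i) * (1/(d:ℝ)^2) := by
    rw [ip_eq_sum]
    simp [cpt, Finset.sum_mul]
  have hd' : ((d:ℝ)^2) ≠ 0 := by positivity
  rw [Hs, Set.mem_setOf_eq, h] at hu
  have : (∑ i, u i) * (1/(d:ℝ)^2) = 1 * (1/(d:ℝ)^2) := by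
    rw [hu]; push_cast; ring
  exact mul_right_cancel₀ (by positivity) this

lemma ip_cpt_right {d : ℕ} {u : V d} (hu : u ∈ Hs d) : ip u (cpt d) = 1/(d:ℝ)^2 := by
  simpa [Hs] using hu

lemma ip_cpt_left {d : ℕ} {u : V d} (hu : u ∈ Hs d) : ip (cpt d) u = 1/(d:ℝ)^2 := by
  rw [ip_comm]; exact ip_cpt_right hu

lemma inner_shift {d : ℕ} (hd : 0 < d) {u v : V d} (hu : u ∈ Hs d) (hv : v ∈ Hs d) :
    (inner ℝ (u - cpt d) (v - cpt d) : ℝ) = ip u v - 1/(d:ℝ)^2 := by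
  rw [inner_sub_left, inner_sub_right, inner_sub_right]
  have h1 : (inner ℝ u (cpt d) : ℝ) = 1/(d:ℝ)^2 := ip_cpt_right hu
  have h2 : (inner ℝ (cpt d) v : ℝ) = 1/(d:ℝ)^2 := ip_cpt_left hv
  have h3 : (inner ℝ (cpt d) (cpt d) : ℝ) = 1/(d:ℝ)^2 := ip_cpt_cpt hd
  have h4 : (inner ℝ u v : ℝ) = ip u v := rfl
  rw [h1, h2, h3, h4]; ring

lemma norm_shift {d : ℕ} (hd : 0 < d) {u : V d} (hu : u ∈ Hs d) :
    ‖u - cpt d‖^2 = ip u u - 1/(d:ℝ)^2 := by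
  rw [← real_inner_self_eq_norm_sq]
  exact inner_shift hd hu hu

lemma LB_le_ip_self {d : ℕ} (hd : 0 < d) {u : V d} (hu : u ∈ Hs d) :
    1/((d:ℝ)*((d:ℝ)+1)) ≤ ip u u := by
  have hD : (1:ℝ) ≤ (d:ℝ) := by exact_mod_cast hd
  have h1 : 0 ≤ ‖u - cpt d‖^2 := by positivity
  have h2 := norm_shift hd hu
  have h3 : 1/((d:ℝ)*((d:ℝ)+1)) ≤ 1/(d:ℝ)^2 := by
    rw [div_le_div_iff₀ (by positivity) (by positivity)]
    nlinarith
  linarith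

lemma ip_le_UB {d : ℕ} (hd : 0 < d) {u v : V d} (hu : u ∈ Hs d) (hv : v ∈ Hs d)
    (h1 : ip u u ≤ 2/((d:ℝ)*((d:ℝ)+1))) (h2 : ip v v ≤ 2/((d:ℝ)*((d:ℝ)+1))) :
    ip u v ≤ 2/((d:ℝ)*((d:ℝ)+1)) := by
  have hD : (1:ℝ) ≤ (d:ℝ) := by exact_mod_cast hd
  set x := u - cpt d
  set y := v - cpt d
  have hx : ‖x‖^2 = ip u u - 1/(d:ℝ)^2 := norm_shift hd hu
  have hy : ‖y‖^2 = ip v v - 1/(d:ℝ)^2 := norm_shift hd hv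
  have hxy : (inner ℝ x y : ℝ) = ip u v - 1/(d:ℝ)^2 := inner_shift hd hu hv
  have hle := real_inner_le_norm x y
  have hr : 1/(d:ℝ)^2 ≤ 2/((d:ℝ)*((d:ℝ)+1)) := by
    rw [div_le_div_iff₀ (by positivity) (by positivity)]
    nlinarith
  have hxn : 0 ≤ ‖x‖ := norm_nonneg x
  have hyn : 0 ≤ ‖y‖ := norm_nonneg y
  nlinarith [sq_nonneg (‖x‖ - ‖y‖), sq_nonneg (‖x‖ + ‖y‖)]


lemma polar_subset {d : ℕ} (hd : 2 ≤ d) {S : Set (V d)}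
    (hek : ∀ k, basisDist d k ∈ S) (hib : inBall d ⊆ S) :
    polar d S ⊆ probSimplex d ∩ outBall d := by
  have hd0 : 0 < d := by omega
  have hD : (2:ℝ) ≤ (d:ℝ) := by exact_mod_cast hd
  have hDne : ((d:ℝ)) ≠ 0 := by positivity
  have hD1pos : (0:ℝ) < (d:ℝ)+1 := by positivity
  intro u hu
  obtain ⟨huH, hup⟩ := hu
  have hsum : ∑ i, u i = 1 := sum_eq_one hd0 huH
  have hpos : ∀ k, 0 ≤ u k := by
    intro k
    have h := hup _ (hek k)
    have hcalc : ip u (basisDist d k) = (u k)/((d:ℝ)+1) + 1/((d:ℝ)*((d:ℝ)+1)) := by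
      rw [ip_eq_sum]
      have key : ∀ i ∈ Finset.univ, u i * basisDist d k i =
          (if k = i then u i else 0)/((d:ℝ)+1) + u i * (1/((d:ℝ)*((d:ℝ)+1))) := by
        intro i _
        simp only [basisDist]
        by_cases hik : k = i <;> simp only [hik, if_true, if_false] <;> field_simp <;> ring
      rw [Finset.sum_congr rfl key, Finset.sum_add_distrib, ← Finset.sum_div,
        Finset.sum_ite_eq, ← Finset.sum_mul, hsum]
      simp
    rw [hcalc] at h
    have h2 : 0 ≤ u k / ((d:ℝ)+1) := by linarith
    have h3 := mul_nonneg h2 hD1pos.le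
    rwa [div_mul_cancel₀ _ (by positivity)] at h3
  refine ⟨⟨huH, hpos⟩, huH, ?_⟩
  -- outBall part
  by_cases hc : u = cpt d
  · rw [hc, ip_cpt_cpt hd0, div_le_div_iff₀ (by positivity) (by positivity)]
    nlinarith
  · set n := ‖u - cpt d‖ with hn_def
    have hn : 0 < n := by
      rw [hn_def, norm_pos_iff]
      exact sub_ne_zero_of_ne hc
    set R : ℝ := 1/((d:ℝ)^2*((d:ℝ)^2-1)) with hR_def
    have hR : 0 < R := by
      apply div_pos one_pos
      have h4 : (4:ℝ) ≤ (d:ℝ)^2 := by nlinarith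
      nlinarith
    set s : ℝ := Real.sqrt R / n with hs_def
    set v : V d := cpt d - s • (u - cpt d) with hv_def
    have hsq : Real.sqrt R ^ 2 = R := Real.sq_sqrt hR.le
    have hsqpos : 0 < Real.sqrt R := Real.sqrt_pos.2 hR
    have hucpt : (inner ℝ u (cpt d) : ℝ) = 1/(d:ℝ)^2 := ip_cpt_right huH
    have hccpt : (inner ℝ (cpt d) (cpt d) : ℝ) = 1/(d:ℝ)^2 := ip_cpt_cpt hd0
    have hvH : v ∈ Hs d := by
      show ip v (cpt d) = 1/(d:ℝ)^2
      show (inner ℝ (cpt d - s • (u - cpt d)) (cpt d) : ℝ) = 1/(d:ℝ)^2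
      rw [inner_sub_left, real_inner_smul_left, inner_sub_left, hccpt, hucpt]
      ring
    have hvB : v ∈ inBall d := by
      refine ⟨hvH, ?_⟩
      have : v - cpt d = (-s) • (u - cpt d) := by
        rw [hv_def]; module
      rw [this, norm_smul]
      simp only [norm_neg, Real.norm_eq_abs, abs_of_pos (by positivity : (0:ℝ) < s)]
      rw [mul_pow, hs_def, div_pow, hsq]
      rw [← hn_def]
      field_simp
      have hd21 : (d:ℝ)^2 - 1 ≠ 0 := (by nlinarith : (0:ℝ) < (d:ℝ)^2 - 1).ne'
      rw [hR_def]; apply le_of_eq; field_simp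
    have hlow := hup v (hib hvB)
    have hipuv : ip u v = 1/(d:ℝ)^2 - Real.sqrt R * n := by
      show (inner ℝ u (cpt d - s • (u - cpt d)) : ℝ) = _
      rw [inner_sub_right, real_inner_smul_right, inner_sub_right, hucpt]
      have huu : (inner ℝ u u : ℝ) = 1/(d:ℝ)^2 + n^2 := by
        have := norm_shift hd0 huH
        have h4 : (inner ℝ u u : ℝ) = ip u u := rfl
        rw [hn_def] at *
        rw [h4]; linarith
      rw [huu, hs_def]
      field_simp
      ring
    rw [hipuv] at hlow
    -- √R * n ≤ γ where γ = 1/(d²(d+1))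
    have hγ : Real.sqrt R * n ≤ 1/((d:ℝ)^2*((d:ℝ)+1)) := by
      have : 1/((d:ℝ)*((d:ℝ)+1)) = 1/(d:ℝ)^2 - 1/((d:ℝ)^2*((d:ℝ)+1)) := by
        field_simp; ring
      linarith
    have hn2 : n^2 ≤ (1/((d:ℝ)^2*((d:ℝ)+1)))^2 / R := by
      rw [le_div_iff₀ hR]
      have h5 : (Real.sqrt R * n)^2 ≤ (1/((d:ℝ)^2*((d:ℝ)+1)))^2 := by
        apply sq_le_sq' _ hγ
        nlinarith
      rw [mul_pow, hsq] at h5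
      nlinarith
    have hfinal : 1/(d:ℝ)^2 + (1/((d:ℝ)^2*((d:ℝ)+1)))^2 / R = 2/((d:ℝ)*((d:ℝ)+1)) := by
      rw [hR_def]
      field_simp
      ring
    have huu : ip u u = 1/(d:ℝ)^2 + n^2 := by
      have := norm_shift hd0 huH
      rw [← hn_def] at this
      linarith
    rw [huu]
    linarith

lemma germ_mem_Hs {d : ℕ} {S : Set (V d)} (hS : IsGerm d S) {p : V d} (hp : p ∈ S) :
    p ∈ Hs d := (hS.1 hp).1

lemma germ_subset_outBall {d : ℕ} {S : Set (V d)} (hS : IsGerm d S) : S ⊆ outBall d :=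
  fun p hp => ⟨(hS.1 hp).1, (hS.2 p hp p hp).2⟩

lemma germ_insert {d : ℕ} (hd : 2 ≤ d) {S : Set (V d)} (hS : IsGerm d S) {u : V d}
    (hu : u ∈ probSimplex d) (huB : ip u u ≤ 2/((d:ℝ)*((d:ℝ)+1)))
    (hlow : ∀ p ∈ S, 1/((d:ℝ)*((d:ℝ)+1)) ≤ ip u p) : IsGerm d (insert u S) := by
  have hd0 : 0 < d := by omega
  constructor
  · intro x hx
    rcases hx with rfl | hx
    · exact hu
    · exact hS.1 hx
  · intro p hp s hs
    have hB : ∀ x ∈ S, ip x x ≤ 2/((d:ℝ)*((d:ℝ)+1)) := fun x hx => (hS.2 x hx x hx).2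
    rcases hp with rfl | hp <;> rcases hs with rfl | hs
    · exact ⟨LB_le_ip_self hd0 hu.1, huB⟩
    · exact ⟨hlow s hs, ip_le_UB hd0 hu.1 (germ_mem_Hs hS hs) huB (hB s hs)⟩
    · refine ⟨?_, ?_⟩
      · rw [ip_comm]; exact hlow p hp
      · rw [ip_comm]; exact ip_le_UB hd0 hu.1 (germ_mem_Hs hS hp) huB (hB p hp)
    · exact hS.2 p hp s hs

lemma exists_maximal_germ {d : ℕ} {S : Set (V d)} (hS : IsGerm d S) :
    ∃ M, S ⊆ M ∧ IsGerm d M ∧ ∀ N, IsGerm d N → M ⊆ N → N ⊆ M := by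
  have hch : ∀ c ⊆ {T : Set (V d) | IsGerm d T}, IsChain (· ⊆ ·) c → c.Nonempty →
      ∃ ub ∈ {T : Set (V d) | IsGerm d T}, ∀ s ∈ c, s ⊆ ub := by
    intro c hcS hchain hcne
    refine ⟨⋃₀ c, ⟨?_, ?_⟩, fun s hs => Set.subset_sUnion_of_mem hs⟩
    · rintro x ⟨t, htc, hxt⟩
      exact (hcS htc).1 hxt
    · rintro p ⟨t1, ht1, hp1⟩ s ⟨t2, ht2, hs2⟩
      rcases hchain.total ht1 ht2 with h | h
      · exact (hcS ht2).2 p (h hp1) s hs2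
      · exact (hcS ht1).2 p hp1 s (h hs2)
  obtain ⟨M, hSM, hmax⟩ := zorn_subset_nonempty {T : Set (V d) | IsGerm d T} hch S hS
  exact ⟨M, hSM, hmax.1, fun N hN hMN => hmax.2 hN hMN⟩

lemma maximal_germ_isQplex {d : ℕ} (hd : 2 ≤ d) {M : Set (V d)} (hM : IsGerm d M)
    (hmax : ∀ N, IsGerm d N → M ⊆ N → N ⊆ M)
    (hek : ∀ k, basisDist d k ∈ M) (hib : inBall d ⊆ M) : IsQplex d M := by
  have hd0 : 0 < d := by omega
  have hMB := germ_subset_outBall hM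
  constructor
  · exact fun p hp => ⟨hM.1 hp, hMB hp⟩
  · apply Set.Subset.antisymm
    · intro p hp
      exact ⟨(hM.1 hp).1, fun v hv => (hM.2 p hp v hv).1⟩
    · intro u hu
      have hu2 := polar_subset hd hek hib hu
      have hins : IsGerm d (insert u M) :=
        germ_insert hd hM hu2.1 hu2.2.2 (fun p hp => hu.2 p hp)
      exact (hmax _ hins (Set.subset_insert _ _)) (Set.mem_insert _ _)


set_option maxHeartbeats 2000000 in
/-- a closed convex germ containing the principal stem
cc(Δ_e ∪ B_i) which is not itself a qplex is contained in uncountably many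
qplexes. -/
theorem statement7 (d : ℕ) (hd : 2 ≤ d) (G : Set (V d)) (hG : IsGerm d G)
    (hclosed : IsClosed G) (hconv : Convex ℝ G)
    (hstem : cc d (basisSimplex d ∪ inBall d) ⊆ G)
    (hnot : ¬ IsQplex d G) :
    ¬ {Q : Set (V d) | IsQplex d Q ∧ G ⊆ Q}.Countable := by
  intro hcount
  have hd0 : 0 < d := by omega
  have hD : (2:ℝ) ≤ (d:ℝ) := by exact_mod_cast hd
  have hDne : ((d:ℝ)) ≠ 0 := by positivity
  -- stem pieces
  have hek : ∀ k, basisDist d k ∈ G := by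
    intro k
    exact hstem (subset_closure (subset_convexHull ℝ _
      (Or.inl (subset_convexHull ℝ _ ⟨k, rfl⟩))))
  have hib : inBall d ⊆ G := fun x hx =>
    hstem (subset_closure (subset_convexHull ℝ _ (Or.inr hx)))
  have hcmem : cpt d ∈ G := by
    apply hib
    refine ⟨cpt_mem_Hs hd0, ?_⟩
    rw [sub_self, norm_zero]
    have h44 : (4:ℝ) ≤ (d:ℝ)^2 := by nlinarith
    have h4 : (0:ℝ) < (d:ℝ)^2*((d:ℝ)^2-1) := by nlinarith
    have h5 : 0 < 1/((d:ℝ)^2*((d:ℝ)^2-1)) := div_pos one_pos h4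
    nlinarith
  have hGd : G ⊆ probSimplex d := hG.1
  have hGB : G ⊆ outBall d := germ_subset_outBall hG
  have hGpol : G ⊆ polar d G := fun p hp => ⟨(hGd hp).1, fun v hv => (hG.2 p hp v hv).1⟩
  have hne : G ≠ polar d G := fun h => hnot ⟨fun p hp => ⟨hGd hp, hGB hp⟩, h⟩
  obtain ⟨q, hqpol, hqG⟩ : ∃ q, q ∈ polar d G ∧ q ∉ G := by
    by_contra h
    push_neg at h
    exact hne (Set.Subset.antisymm hGpol (fun x hx => h x hx))
  -- separation
  obtain ⟨f, w, hfw1, hfw2⟩ := geometric_hahn_banach_closed_point hconv hclosed hqG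
  set a0 : V d := (InnerProductSpace.toDual ℝ (V d)).symm f with ha0def
  have ha0 : ∀ x : V d, (inner ℝ a0 x : ℝ) = f x := fun x => InnerProductSpace.toDual_symm_apply
  set σ : ℝ := ip a0 (cpt d) with hσdef
  set A : V d := a0 - ((d:ℝ)^2 * σ) • cpt d with hAdef
  have hcc : (inner ℝ (cpt d) (cpt d) : ℝ) = 1/(d:ℝ)^2 := ip_cpt_cpt hd0
  have hAc : (inner ℝ A (cpt d) : ℝ) = 0 := by
    rw [hAdef, inner_sub_left, real_inner_smul_left, hcc]
    have h2 : (inner ℝ a0 (cpt d) : ℝ) = σ := rfl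
    rw [h2]
    field_simp
    ring
  have hAx : ∀ x, x ∈ Hs d → (inner ℝ A x : ℝ) = f x - σ := by
    intro x hx
    have h3 : (inner ℝ (cpt d) x : ℝ) = 1/(d:ℝ)^2 := ip_cpt_left hx
    rw [hAdef, inner_sub_left, real_inner_smul_left, ha0, h3]
    field_simp
  have hσc : σ = f (cpt d) := ha0 (cpt d)
  set β : ℝ := w - σ with hβdef
  have hβpos : 0 < β := by
    have h4 := hfw1 (cpt d) hcmem
    rw [hβdef]
    linarith [hσc]
  have hGβ : ∀ g ∈ G, (inner ℝ A g : ℝ) < β := by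
    intro g hg
    rw [hAx g (hGd hg).1, hβdef]
    linarith [hfw1 g hg]
  set Hst : ℝ := ip A q with hHdef
  have hqH : q ∈ Hs d := hqpol.1
  have hAq : (inner ℝ A q : ℝ) = Hst := rfl
  have hqst : β < Hst := by
    have h5 := hAx q hqH
    rw [hAq] at h5
    rw [hβdef, h5]
    linarith
  have hHpos : 0 < Hst := lt_trans hβpos hqst
  set t₂ : ℝ := β / Hst with ht₂def
  have ht₂0 : 0 < t₂ := div_pos hβpos hHpos
  have ht₂1 : t₂ < 1 := (div_lt_one hHpos).2 hqst
  set γ : ℝ := 1/((d:ℝ)^2*((d:ℝ)+1)) with hγdef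
  have hγpos : 0 < γ := by rw [hγdef]; positivity
  have hLB : 1/((d:ℝ)*((d:ℝ)+1)) = 1/(d:ℝ)^2 - γ := by
    rw [hγdef]; field_simp; ring
  have hcq : (inner ℝ (cpt d) q : ℝ) = 1/(d:ℝ)^2 := ip_cpt_left hqH
  -- the key inner-product formula
  have hip_pr : ∀ t s : ℝ, ip (cpt d - (γ/(t*Hst)) • A) (cpt d + s • (q - cpt d))
      = 1/(d:ℝ)^2 - (γ/(t*Hst))*(s*Hst) := by
    intro t s
    show (inner ℝ (cpt d - (γ/(t*Hst)) • A) (cpt d + s • (q - cpt d)) : ℝ) = _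
    simp only [inner_sub_left, inner_add_right, inner_sub_right, real_inner_smul_left,
      real_inner_smul_right]
    rw [hcc, hcq, hAc, hAq]
    ring
  -- main construction
  have key : ∀ t ∈ Set.Ioc t₂ 1, ∃ M : Set (V d), IsGerm d M ∧ IsQplex d M ∧ G ⊆ M ∧
      (cpt d - (γ/(t*Hst)) • A) ∈ M ∧ (cpt d + t • (q - cpt d)) ∈ M := by
    intro t ht
    obtain ⟨ht1, htle⟩ := ht
    have ht0 : 0 < t := lt_trans ht₂0 ht1
    have htH : 0 < t * Hst := by positivity
    have hβtH : β < t * Hst := by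
      have : t₂ * Hst < t * Hst := by nlinarith
      rw [ht₂def, div_mul_cancel₀ _ (ne_of_gt hHpos)] at this
      exact this
    have hμpos : 0 < γ/(t*Hst) := by positivity
    -- p t ∈ polar G
    have hppol : (cpt d - (γ/(t*Hst)) • A) ∈ polar d G := by
      refine ⟨?_, ?_⟩
      · show ip _ (cpt d) = _
        show (inner ℝ (cpt d - (γ/(t*Hst)) • A) (cpt d) : ℝ) = _
        rw [inner_sub_left, real_inner_smul_left, hcc, hAc]
        ring
      · intro g hg
        have hexp : ip (cpt d - (γ/(t*Hst)) • A) g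
            = 1/(d:ℝ)^2 - (γ/(t*Hst)) * (inner ℝ A g : ℝ) := by
          show (inner ℝ (cpt d - (γ/(t*Hst)) • A) g : ℝ) = _
          rw [inner_sub_left, real_inner_smul_left]
          have h3 : (inner ℝ (cpt d) g : ℝ) = 1/(d:ℝ)^2 := ip_cpt_left (hGd hg).1
          rw [h3]
        rw [hexp, hLB]
        have h1 : (γ/(t*Hst)) * (inner ℝ A g : ℝ) ≤ (γ/(t*Hst)) * β :=
          mul_le_mul_of_nonneg_left (hGβ g hg).le hμpos.le
        have h2 : (γ/(t*Hst)) * β ≤ γ := by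
          rw [div_mul_eq_mul_div, div_le_iff₀ htH]
          nlinarith
        linarith
    -- r t ∈ polar G
    have hrpol : (cpt d + t • (q - cpt d)) ∈ polar d G := by
      refine ⟨?_, ?_⟩
      · show (inner ℝ (cpt d + t • (q - cpt d)) (cpt d) : ℝ) = _
        rw [inner_add_left, real_inner_smul_left, inner_sub_left, hcc]
        have hqc : (inner ℝ q (cpt d) : ℝ) = 1/(d:ℝ)^2 := ip_cpt_right hqH
        rw [hqc]
        ring
      · intro g hg
        have hgH : g ∈ Hs d := (hGd hg).1
        have h3 : (inner ℝ (cpt d) g : ℝ) = 1/(d:ℝ)^2 := ip_cpt_left hgH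
        have hexp : ip (cpt d + t • (q - cpt d)) g
            = 1/(d:ℝ)^2 + t * ((inner ℝ q g : ℝ) - 1/(d:ℝ)^2) := by
          show (inner ℝ (cpt d + t • (q - cpt d)) g : ℝ) = _
          rw [inner_add_left, real_inner_smul_left, inner_sub_left, h3]
        have hqg : 1/((d:ℝ)*((d:ℝ)+1)) ≤ (inner ℝ q g : ℝ) := hqpol.2 g hg
        rw [hLB] at hqg ⊢
        rw [hexp]
        nlinarith
    have hpd := polar_subset hd hek hib hppol
    have hrd := polar_subset hd hek hib hrpol
    -- build the germ
    have hg1 : IsGerm d (insert (cpt d + t • (q - cpt d)) G) :=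
      germ_insert hd hG hrd.1 hrd.2.2 (fun g hg => hrpol.2 g hg)
    have hg2 : IsGerm d (insert (cpt d - (γ/(t*Hst)) • A) (insert (cpt d + t • (q - cpt d)) G)) := by
      apply germ_insert hd hg1 hpd.1 hpd.2.2
      intro x hx
      rcases hx with rfl | hx
      · have heq : ip (cpt d - (γ/(t*Hst)) • A) (cpt d + t • (q - cpt d))
            = 1/(d:ℝ)^2 - γ := by
          have hcancel : (γ/(t*Hst))*(t*Hst) = γ := div_mul_cancel₀ _ (ne_of_gt htH)
          rw [hip_pr, hcancel]
        rw [heq, hLB]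
      · exact hppol.2 x hx
    obtain ⟨M, hsub, hMgerm, hMmax⟩ := exists_maximal_germ hg2
    have hGM : G ⊆ M := fun x hx => hsub (Set.mem_insert_of_mem _ (Set.mem_insert_of_mem _ hx))
    have hQ : IsQplex d M := maximal_germ_isQplex hd hMgerm hMmax
      (fun k => hGM (hek k)) (fun x hx => hGM (hib hx))
    exact ⟨M, hMgerm, hQ, hGM, hsub (Set.mem_insert _ _),
      hsub (Set.mem_insert_of_mem _ (Set.mem_insert _ _))⟩
  -- choose the qplexes
  have key' : ∀ t : ℝ, ∃ M : Set (V d), t ∈ Set.Ioc t₂ 1 → (IsGerm d M ∧ IsQplex d M ∧ G ⊆ M ∧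
      (cpt d - (γ/(t*Hst)) • A) ∈ M ∧ (cpt d + t • (q - cpt d)) ∈ M) := by
    intro t
    by_cases h : t ∈ Set.Ioc t₂ 1
    · obtain ⟨M, hM⟩ := key t h
      exact ⟨M, fun _ => hM⟩
    · exact ⟨∅, fun h' => absurd h' h⟩
  choose F hF using key'
  -- injectivity
  have claim : ∀ t1 ∈ Set.Ioc t₂ 1, ∀ t2 ∈ Set.Ioc t₂ 1, t1 < t2 → F t1 ≠ F t2 := by
    intro t1 h1 t2 h2 hlt heq
    obtain ⟨hg1, _, _, hp1, _⟩ := hF t1 h1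
    obtain ⟨_, _, _, _, hr2⟩ := hF t2 h2
    rw [← heq] at hr2
    have hpair := (hg1.2 _ hp1 _ hr2).1
    rw [hip_pr t1 t2, hLB] at hpair
    have ht10 : 0 < t1 := lt_trans ht₂0 h1.1
    have hmain : γ < (γ/(t1*Hst))*(t2*Hst) := by
      rw [div_mul_eq_mul_div, lt_div_iff₀ (by positivity)]
      nlinarith [mul_pos hγpos hHpos, mul_pos (mul_pos hγpos hHpos) (sub_pos.2 hlt)]
    linarith
  have hinj : Set.InjOn F (Set.Ioc t₂ 1) := by
    intro x hx y hy heq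
    by_contra hne'
    rcases Ne.lt_or_gt hne' with h | h
    · exact claim _ hx _ hy h heq
    · exact claim _ hy _ hx h heq.symm
  have hmaps : Set.MapsTo F (Set.Ioc t₂ 1) {Q : Set (V d) | IsQplex d Q ∧ G ⊆ Q} := by
    intro t ht
    obtain ⟨_, hq2, hq3, _, _⟩ := hF t ht
    exact ⟨hq2, hq3⟩
  have hcnt : (Set.Ioc t₂ 1).Countable := hmaps.countable_of_injOn hinj hcount
  have hle : (Cardinal.mk (Set.Ioc t₂ 1)) ≤ Cardinal.aleph0 :=
    Cardinal.le_aleph0_iff_set_countable.2 hcnt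
  rw [Cardinal.mk_Ioc_real ht₂1] at hle
  exact absurd hle (not_le.2 Cardinal.aleph0_lt_continuum)
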